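/- Let k ≥ 4 and suppose integers n > n_1 ≥ 2, m > m_1 ≥ 0 satisfy F_n^{(k)} - 2^m = F_{n_1}^{(k)} - 2^{m_1} with 2 ≤ n_1 ≤ k+1, k+2 ≤ n ≤ 2k+2 and n_1 < n-1. Then m = n-2 and there exist integers a > b ≥ 0 with (a,b) ≠ (1,0) such that n - k = 2^a - 2^b, n_1 = b - 1 + 2^a - 2^b and m_1 = a - 3 + 2^a - 2^b. -/

import Mathlib

/-- The `k`-generalized Fibonacci sequence: `F 0 = 0`, `F 1 = 1`, and each later
term is the sum of the `k` preceding terms (terms with negative index being 0). -/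
def genFib (k : ℕ) : ℕ → ℕ
  | 0 => 0
  | 1 => 1
  | n + 2 => ∑ i ∈ Finset.range k, genFib k (n + 1 - i)
termination_by n => n
decreasing_by omega

lemma genFib_zero (k : ℕ) : genFib k 0 = 0 := by rw [genFib]
lemma genFib_one (k : ℕ) : genFib k 1 = 1 := by rw [genFib]

lemma genFib_two (k : ℕ) (hk : 1 ≤ k) : genFib k 2 = 1 := by
  rw [genFib]
  rw [Finset.sum_eq_single_of_mem 0 (Finset.mem_range.2 (by omega))]
  · simp [genFib_one]
  · intro b _ hb
    have : 0 + 1 - b = 0 := by omega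
    rw [this, genFib_zero]

lemma genFib_recur (k n : ℕ) (hk : 1 ≤ k) (hn : 1 ≤ n) :
    genFib k (n + 2) + genFib k (n + 1 - k) = 2 * genFib k (n + 1) := by
  obtain ⟨k', rfl⟩ : ∃ k', k = k' + 1 := ⟨k - 1, by omega⟩
  obtain ⟨m, rfl⟩ : ∃ m, n = m + 1 := ⟨n - 1, by omega⟩
  have e3 : genFib (k'+1) (m+3) = ∑ i ∈ Finset.range (k'+1), genFib (k'+1) (m + 2 - i) := by
    rw [genFib]
  have e2 : genFib (k'+1) (m+2) = ∑ i ∈ Finset.range (k'+1), genFib (k'+1) (m + 1 - i) := by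
    rw [genFib]
  have harg : m + 1 + 1 - (k' + 1) = m + 1 - k' := by omega
  rw [show m+1+2 = m+3 from rfl, e3, harg,
    Finset.sum_range_succ' (fun i => genFib (k'+1) (m + 2 - i)) k']
  have h1 : ∀ i ∈ Finset.range k', genFib (k'+1) (m + 2 - (i+1)) = genFib (k'+1) (m + 1 - i) := by
    intro i _; congr 1; omega
  rw [Finset.sum_congr rfl h1]
  have e2' : genFib (k'+1) (m+2) =
      (∑ i ∈ Finset.range k', genFib (k'+1) (m + 1 - i)) + genFib (k'+1) (m + 1 - k') := by
    rw [e2, Finset.sum_range_succ]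
  simp only [Nat.sub_zero]
  rw [show m+1+1 = m+2 from rfl]
  omega

lemma genFib_pow (k n : ℕ) (hk : 1 ≤ k) (h2 : 2 ≤ n) (hn : n ≤ k + 1) :
    genFib k n = 2 ^ (n - 2) := by
  obtain ⟨d, rfl⟩ : ∃ d, n = d + 2 := ⟨n - 2, by omega⟩
  induction d with
  | zero => simpa using genFib_two k hk
  | succ d ih =>
    have hrec := genFib_recur k (d + 1) hk (by omega)
    have hz : d + 1 + 1 - k = 0 := by omega
    rw [hz, genFib_zero] at hrec
    have ihv := ih (by omega) (by omega)
    rw [show d + 2 - 2 = d from by omega] at ihv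
    rw [show d+1+2 = (d+1)+2 from rfl] at hrec ⊢
    have : genFib k (d + 1 + 2) = 2 * 2 ^ d := by
      rw [show d+1+1 = d+2 from rfl] at hrec
      omega
    rw [this]
    rw [show d + 1 + 2 - 2 = d + 1 from by omega, pow_succ]
    ring

lemma genFib_pow2 (k j : ℕ) (hk : 4 ≤ k) (hj : j ≤ k) :
    4 * genFib k (k + 2 + j) + (j + 2) * 2 ^ (j + 1) = 2 ^ (k + 2 + j) := by
  induction j with
  | zero =>
    have hrec := genFib_recur k k (by omega) (by omega)
    rw [show k + 1 - k = 1 from by omega, genFib_one] at hrec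
    have h2 : genFib k (k + 1) = 2 ^ (k - 1) := by
      have := genFib_pow k (k + 1) (by omega) (by omega) (by omega)
      rwa [show k + 1 - 2 = k - 1 from by omega] at this
    rw [h2] at hrec
    have p1 : 2 ^ k = 2 * 2 ^ (k - 1) := by
      rw [← pow_succ']; congr 1; omega
    have p2 : 2 ^ (k + 2 + 0) = 4 * 2 ^ k := by
      rw [show k + 2 + 0 = k + 2 from rfl, pow_add]; ring
    simp only [Nat.add_zero] at *
    omega
  | succ j ih =>
    have ihv := ih (by omega)
    have hrec := genFib_recur k (k + 1 + j) (by omega) (by omega)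
    rw [show k + 1 + j + 1 - k = j + 2 from by omega] at hrec
    have h2 : genFib k (j + 2) = 2 ^ j := by
      have := genFib_pow k (j + 2) (by omega) (by omega) (by omega)
      rwa [show j + 2 - 2 = j from by omega] at this
    rw [h2] at hrec
    rw [show k + 1 + j + 2 = k + 2 + (j + 1) from by omega,
        show k + 1 + j + 1 = k + 2 + j from by omega] at hrec
    zify at ihv hrec ⊢
    linear_combination 2 * ihv + 4 * hrec

lemma genFib_pow2' (k n : ℕ) (hk : 4 ≤ k) (h1 : k + 2 ≤ n) (h2 : n ≤ 2 * k + 2) :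
    4 * genFib k n + (n - k) * 2 ^ (n - k - 1) = 2 ^ n := by
  obtain ⟨j, rfl⟩ : ∃ j, n = k + 2 + j := ⟨n - k - 2, by omega⟩
  rw [show k + 2 + j - k = j + 2 from by omega, show j + 2 - 1 = j + 1 from by omega]
  exact genFib_pow2 k j hk (by omega)

theorem pillai_case2b (k n n1 m m1 : ℕ) (hk : 4 ≤ k) (hn1l : 2 ≤ n1) (hn1u : n1 ≤ k + 1)
    (hnl : k + 2 ≤ n) (hnu : n ≤ 2 * k + 2) (hnn : n1 < n - 1) (hm : m1 < m)
    (heq : (genFib k n : ℤ) - 2 ^ m = (genFib k n1 : ℤ) - 2 ^ m1) :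
    m = n - 2 ∧ ∃ a b : ℕ, b < a ∧ (a, b) ≠ (1, 0) ∧ n - k = 2 ^ a - 2 ^ b ∧
      n1 = 2 ^ a - 2 ^ b + b - 1 ∧ m1 = 2 ^ a - 2 ^ b + a - 3 := by
  obtain ⟨p, rfl⟩ : ∃ p, n1 = p + 2 := ⟨n1 - 2, by omega⟩
  obtain ⟨dd, hdd⟩ : ∃ dd, n - k = dd + 2 := ⟨n - k - 2, by omega⟩
  have hF2 := genFib_pow2' k n hk hnl hnu
  rw [hdd, show dd + 2 - 1 = dd + 1 from by omega] at hF2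
  have hF1 : genFib k (p + 2) = 2 ^ p := by
    have := genFib_pow k (p + 2) (by omega) (by omega) (by omega)
    simpa using this
  rw [hF1] at heq
  push_cast at heq
  have hF2z : (4:ℤ) * genFib k n + (dd + 2) * 2 ^ (dd + 1) = 2 ^ n := by exact_mod_cast hF2
  have hZ : (2:ℤ)^n + 2^(m1+2) = 2^(p+2) + 2^(m+2) + (dd+2) * 2^(dd+1) := by
    linear_combination 4 * heq - hF2z
  have hE : 2^n + 2^(m1+2) = 2^(p+2) + 2^(m+2) + (dd+2) * 2^(dd+1) := by exact_mod_cast hZ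
  -- make the nonlinear term an atom for omega
  generalize hYe : (dd + 2) * 2 ^ (dd + 1) = Y at hE
  have hY1 : 0 < Y := by rw [← hYe]; positivity
  have hmn : m = n - 2 := by
    have hub : m + 2 ≤ n := by
      by_contra hc
      have l1 : 2^n ≤ 2^(m+1) := Nat.pow_le_pow_right (by norm_num) (by omega)
      have l2 : 2^(m1+2) ≤ 2^(m+1) := Nat.pow_le_pow_right (by norm_num) (by omega)
      have l3 : (2:ℕ)^(m+2) = 2^(m+1) * 2 := pow_succ 2 (m+1)
      have l4 : (1:ℕ) ≤ 2^(p+2) := Nat.one_le_two_pow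
      omega
    have hlb : ¬ (m + 2 ≤ n - 1) := by
      intro hc
      have l1 : 2^(m+2) ≤ 2^(n-1) := Nat.pow_le_pow_right (by norm_num) hc
      have l2 : 2^(p+2) ≤ 2^(n-2) := Nat.pow_le_pow_right (by norm_num) (by omega)
      have hp : k - 3 < (2:ℕ)^(k-3) := Nat.lt_two_pow_self
      have hd : dd + 2 ≤ 3 * 2^(k-3) := by omega
      have l5 : Y ≤ 3 * 2^(n-4) := by
        rw [← hYe]
        calc (dd+2) * 2^(dd+1) ≤ (3 * 2^(k-3)) * 2^(dd+1) := Nat.mul_le_mul_right _ hd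
        _ = 3 * 2^(n-4) := by
            rw [mul_assoc, ← pow_add, show k - 3 + (dd+1) = n - 4 from by omega]
      have e1 : (2:ℕ)^n = 16 * 2^(n-4) := by
        conv_lhs => rw [show n = n-4+4 from by omega]
        rw [pow_add]; ring
      have e2 : (2:ℕ)^(n-1) = 8 * 2^(n-4) := by
        rw [show n-1 = n-4+3 from by omega, pow_add]; ring
      have e3 : (2:ℕ)^(n-2) = 4 * 2^(n-4) := by
        rw [show n-2 = n-4+2 from by omega, pow_add]; ring
      have l6 : (1:ℕ) ≤ 2^(m1+2) := Nat.one_le_two_pow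
      omega
    omega
  -- now m + 2 = n
  have hE2 : 2^(m1+2) = 2^(p+2) + Y := by
    have : (2:ℕ)^(m+2) = 2^n := by rw [show m + 2 = n from by omega]
    omega
  have hps : p < m1 := by
    have h1 : (2:ℕ)^(p+2) < 2^(m1+2) := by omega
    have := (Nat.pow_lt_pow_iff_right (by norm_num : 1 < 2)).1 h1
    omega
  obtain ⟨s, hs, hs1⟩ : ∃ s, m1 = p + s ∧ 1 ≤ s := ⟨m1 - p, by omega, by omega⟩
  have hone : (1:ℕ) ≤ 2^s := Nat.one_le_two_pow
  have hE2z : (2:ℤ)^(m1+2) = 2^(p+2) + Y := by exact_mod_cast hE2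
  have hsmz : (2:ℤ)^(m1+2) = 2^(p+2) * 2^s := by rw [← pow_add]; congr 1; omega
  have heq2 : 2^(p+2) * (2^s - 1) = Y := by
    zify [hone]
    linear_combination hE2z - hsmz
  rw [← hYe] at heq2
  have hb : dd + 1 ≤ p + 2 := by
    by_contra hc
    push_neg at hc
    obtain ⟨t, ht⟩ : ∃ t, dd + 1 = p + 2 + (t + 1) := ⟨dd - p - 2, by omega⟩
    have hc2 : 2^s - 1 = (dd+2) * 2^(t+1) := by
      have hp0 : 0 < (2:ℕ)^(p+2) := by positivity
      apply Nat.eq_of_mul_eq_mul_left hp0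
      calc 2^(p+2) * (2^s - 1) = (dd+2) * 2^(dd+1) := heq2
      _ = 2^(p+2) * ((dd+2) * 2^(t+1)) := by rw [ht, pow_add]; ring
    have h2s : (2:ℕ)^s = 2 * 2^(s-1) := by
      rw [← pow_succ']; congr 1; omega
    have h2t : (dd+2) * (2:ℕ)^(t+1) = 2 * ((dd+2) * 2^t) := by rw [pow_succ]; ring
    rw [h2t] at hc2
    have hone2 : (1:ℕ) ≤ 2^(s-1) := Nat.one_le_two_pow
    generalize (dd+2) * 2^t = X at hc2
    omega
  obtain ⟨b, hbv⟩ : ∃ b, p + 2 = dd + 1 + b := ⟨p + 1 - dd, by omega⟩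
  have key : 2^b * (2^s - 1) = dd + 2 := by
    have hp0 : 0 < (2:ℕ)^(dd+1) := by positivity
    apply Nat.eq_of_mul_eq_mul_left hp0
    calc 2^(dd+1) * (2^b * (2^s-1)) = 2^(p+2) * (2^s - 1) := by rw [hbv, pow_add]; ring
    _ = (dd+2) * 2^(dd+1) := heq2
    _ = 2^(dd+1) * (dd+2) := by ring
  have hval : 2^(b+s) - 2^b = dd + 2 := by
    have h2 : (2:ℕ)^b ≤ 2^(b+s) := Nat.pow_le_pow_right (by norm_num) (by omega)
    zify [hone] at key
    zify [h2]
    linear_combination key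
  refine ⟨hmn, b + s, b, by omega, ?_, by omega, by omega, by omega⟩
  intro h
  rw [Prod.mk.injEq] at h
  obtain ⟨h1, h2⟩ := h
  subst h2
  have : s = 1 := by omega
  subst this
  rw [pow_zero, pow_one] at key
  omega
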